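/- For every α ∈ [0,1] there exist pairwise comparable reconciled gene trees 𝒢₁, 𝒢₂, 𝒢₃, each using the lca-mapping, such that PLR(𝒢₁, 𝒢₃) > PLR(𝒢₁, 𝒢₂) + PLR(𝒢₂, 𝒢₃). In particular, PLR does not satisfy the triangle inequality, even under the equality relation ≃_d. -/

import Mathlib

open SimpleGraph

attribute [local instance] Classical.propDecidable

/-- A rooted tree: a finite connected acyclic graph with a distinguished root. -/
structure RTree (V : Type*) [Fintype V] where
  adj : SimpleGraph V
  isTree : adj.IsTree
  root : V

variable {V : Type*} [Fintype V]

/-- `Anc T a b` : `a` is an ancestor of `b` (i.e. `b ⪯ a`), expressed as: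
`a` lies on the (unique) path from the root to `b`. -/
def Anc (T : RTree V) (a b : V) : Prop :=
  T.adj.dist T.root b = T.adj.dist T.root a + T.adj.dist a b

/-- `IsChild T c p` : `c` is a child of `p`. -/
def IsChild (T : RTree V) (c p : V) : Prop :=
  T.adj.Adj c p ∧ Anc T p c

/-- The set of children of `v`. -/
def childSet (T : RTree V) (v : V) : Set V := {c | IsChild T c v}

/-- A leaf is a node with no children. -/
def IsLeaf (T : RTree V) (v : V) : Prop := ∀ c, ¬ IsChild T c v

/-- The clade of `v`: the set of leaves descending from `v`. -/
def clade (T : RTree V) (v : V) : Set V := {x | IsLeaf T x ∧ Anc T v x}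

/-- `w` is the lowest common ancestor of the set `X` in `T`. -/
def IsLCA (T : RTree V) (X : Set V) (w : V) : Prop :=
  (∀ x ∈ X, Anc T w x) ∧ ∀ w', (∀ x ∈ X, Anc T w' x) → Anc T w' w

/-- A species tree is a rooted binary tree: every internal node has exactly two children. -/
def IsSpeciesTree (S : RTree V) : Prop :=
  ∀ v, ¬ IsLeaf S v → (childSet S v).ncard = 2

/-- Number of leaves of a rooted tree. -/
noncomputable def numLeaves (T : RTree V) : ℕ := {v | IsLeaf T v}.ncard

/-- `Hsum S` = `H(S)`: the sum of root-to-internal-node distances in `S`. -/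
noncomputable def Hsum (S : RTree V) : ℕ :=
  ∑ v : V, if IsLeaf S v then 0 else S.adj.dist S.root v

inductive Evt | dup | spec | extant
deriving DecidableEq

/-- A reconciled gene tree with species tree `S`, whose leaves are labeled bijectively by
the set of genes `Γ`. -/
structure Recon (Γ : Type*) (VG : Type*) (VS : Type*) [Fintype VG] [Fintype VS]
    (S : RTree VS) where
  tree : RTree VG
  geneLeaf : Γ → VG
  geneLeaf_inj : Function.Injective geneLeaf
  geneLeaf_range : ∀ v, IsLeaf tree v ↔ ∃ g, geneLeaf g = v
  μ : VG → VS
  lbl : VG → Evt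
  internal_children : ∀ v, ¬ IsLeaf tree v → 2 ≤ (childSet tree v).ncard
  leaf_species : ∀ v, IsLeaf tree v → IsLeaf S (μ v)
  leaf_lbl : ∀ v, IsLeaf tree v → lbl v = Evt.extant
  internal_lbl : ∀ v, ¬ IsLeaf tree v → lbl v = Evt.dup ∨ lbl v = Evt.spec
  time_consistent : ∀ a b, Anc tree a b → Anc S (μ a) (μ b)
  spec_two_children : ∀ v, lbl v = Evt.spec →
    ¬ IsLeaf S (μ v) ∧ (childSet tree v).ncard = 2
  spec_separates : ∀ v, lbl v = Evt.spec →
    ∀ v₁ v₂, IsChild tree v₁ v → IsChild tree v₂ v → v₁ ≠ v₂ →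
      ∃ s₁ s₂, IsChild S s₁ (μ v) ∧ IsChild S s₂ (μ v) ∧ s₁ ≠ s₂ ∧
        ((Anc S s₁ (μ v₁) ∧ Anc S s₂ (μ v₂)) ∨ (Anc S s₂ (μ v₁) ∧ Anc S s₁ (μ v₂)))

variable {Γ : Type*} {VS VG₁ VG₂ : Type*} [Fintype VS] [Fintype VG₁] [Fintype VG₂]
  {S : RTree VS}

/-- The clade of a gene tree node, as a set of genes. -/
def gclade (𝒢 : Recon Γ VG₁ VS S) (v : VG₁) : Set Γ :=
  {g | Anc 𝒢.tree v (𝒢.geneLeaf g)}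

/-- Two reconciled gene trees (over the same species tree and gene set) are comparable if
corresponding extant genes map to the same species. -/
def Comparable (𝒢₁ : Recon Γ VG₁ VS S) (𝒢₂ : Recon Γ VG₂ VS S) : Prop :=
  ∀ g, 𝒢₁.μ (𝒢₁.geneLeaf g) = 𝒢₂.μ (𝒢₂.geneLeaf g)

/-- `m` is the correspondence map `v ↦ lca_{G₂}(L(G₁(v)))`. -/
def IsLcaMap (𝒢₁ : Recon Γ VG₁ VS S) (𝒢₂ : Recon Γ VG₂ VS S) (m : VG₁ → VG₂) : Prop :=
  ∀ v, IsLCA 𝒢₂.tree (𝒢₂.geneLeaf '' gclade 𝒢₁ v) (m v)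

/-- `μ` is the lca-mapping: every node maps to the lca of the species of its leaf descendants. -/
def UsesLcaMapping (𝒢 : Recon Γ VG₁ VS S) : Prop :=
  ∀ v, IsLCA S (𝒢.μ '' clade 𝒢.tree v) (𝒢.μ v)

/-- The path component `d_path(𝒢₁,𝒢₂)` (with `m` the lca correspondence map). -/
noncomputable def dPath (𝒢₁ : Recon Γ VG₁ VS S) (𝒢₂ : Recon Γ VG₂ VS S)
    (m : VG₁ → VG₂) : ℕ :=
  ∑ v : VG₁, S.adj.dist (𝒢₁.μ v) (𝒢₂.μ (m v))

/-- The label component `d_lbl(𝒢₁,𝒢₂)`. -/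
noncomputable def dLbl (𝒢₁ : Recon Γ VG₁ VS S) (𝒢₂ : Recon Γ VG₂ VS S)
    (m : VG₁ → VG₂) : ℕ :=
  {v : VG₁ | 𝒢₁.lbl v ≠ 𝒢₂.lbl (m v)}.ncard

/-- The asymmetric dissimilarity `d_asym = α·d_path + (1−α)·d_lbl`. -/
noncomputable def dAsym (α : ℝ) (𝒢₁ : Recon Γ VG₁ VS S) (𝒢₂ : Recon Γ VG₂ VS S)
    (m : VG₁ → VG₂) : ℝ :=
  α * (dPath 𝒢₁ 𝒢₂ m : ℝ) + (1 - α) * (dLbl 𝒢₁ 𝒢₂ m : ℝ)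

/-- The Path-Label Reconciliation dissimilarity `PLR(𝒢₁,𝒢₂)`, where `m₁₂`, `m₂₁` are the
lca correspondence maps in the two directions. -/
noncomputable def PLR (α : ℝ) (𝒢₁ : Recon Γ VG₁ VS S) (𝒢₂ : Recon Γ VG₂ VS S)
    (m₁₂ : VG₁ → VG₂) (m₂₁ : VG₂ → VG₁) : ℝ :=
  dAsym α 𝒢₁ 𝒢₂ m₁₂ + dAsym α 𝒢₂ 𝒢₁ m₂₁

/-- An edge `uv` (with `u` the parent of `v`) is redundant if both endpoints are duplications
mapped to the same species. -/
def RedundantEdge (𝒢 : Recon Γ VG₁ VS S) (u v : VG₁) : Prop :=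
  IsChild 𝒢.tree v u ∧ 𝒢.μ u = 𝒢.μ v ∧ 𝒢.lbl u = Evt.dup ∧ 𝒢.lbl v = Evt.dup

/-- A reconciled gene tree is least duplication-resolved if it has no redundant edge. -/
def LeastDupResolved (𝒢 : Recon Γ VG₁ VS S) : Prop :=
  ∀ u v, ¬ RedundantEdge 𝒢 u v

/-- `𝒢'` is obtained from `𝒢` by contracting the edge `uv` (`u` the parent of `v`), i.e.
deleting `v` and attaching its children to `u`; `φ` is the corresponding quotient map. -/
def IsContractionOf (𝒢 : Recon Γ VG₁ VS S) (u v : VG₁) (𝒢' : Recon Γ VG₂ VS S)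
    (φ : VG₁ → VG₂) : Prop :=
  Function.Surjective φ ∧
  φ u = φ v ∧
  (∀ a b, φ a = φ b → a = b ∨ (a = u ∧ b = v) ∨ (a = v ∧ b = u)) ∧
  (∀ x y, 𝒢'.tree.adj.Adj x y ↔
    ∃ a b, φ a = x ∧ φ b = y ∧ 𝒢.tree.adj.Adj a b ∧ ¬(a = u ∧ b = v) ∧ ¬(a = v ∧ b = u)) ∧
  𝒢'.tree.root = φ 𝒢.tree.root ∧
  (∀ g, 𝒢'.geneLeaf g = φ (𝒢.geneLeaf g)) ∧
  (∀ a, 𝒢'.μ (φ a) = 𝒢.μ a) ∧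
  (∀ a, 𝒢'.lbl (φ a) = 𝒢.lbl a)

/-- Symmetrized redundancy relation on nodes. -/
def RedundantAdj (𝒢 : Recon Γ VG₁ VS S) (a b : VG₁) : Prop :=
  RedundantEdge 𝒢 a b ∨ RedundantEdge 𝒢 b a

/-- `𝒢'` is the least duplication-resolved tree `LR(𝒢)` obtained by contracting every
redundant edge of `𝒢`; `φ` is the corresponding quotient map. -/
def IsLROf (𝒢 : Recon Γ VG₁ VS S) (𝒢' : Recon Γ VG₂ VS S) (φ : VG₁ → VG₂) : Prop :=
  Function.Surjective φ ∧
  (∀ a b, φ a = φ b ↔ Relation.EqvGen (RedundantAdj 𝒢) a b) ∧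
  (∀ x y, 𝒢'.tree.adj.Adj x y ↔
    ∃ a b, φ a = x ∧ φ b = y ∧ 𝒢.tree.adj.Adj a b ∧ ¬ RedundantAdj 𝒢 a b) ∧
  𝒢'.tree.root = φ 𝒢.tree.root ∧
  (∀ g, 𝒢'.geneLeaf g = φ (𝒢.geneLeaf g)) ∧
  (∀ a, 𝒢'.μ (φ a) = 𝒢.μ a) ∧
  (∀ a, 𝒢'.lbl (φ a) = 𝒢.lbl a)

/-- Isomorphism of reconciled gene trees: a leaf-fixing bijection preserving edges,
species maps and event labels. -/
def ReconIso (𝒢₁ : Recon Γ VG₁ VS S) (𝒢₂ : Recon Γ VG₂ VS S) : Prop :=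
  ∃ φ : VG₁ ≃ VG₂,
    (∀ g, φ (𝒢₁.geneLeaf g) = 𝒢₂.geneLeaf g) ∧
    (∀ a b, 𝒢₂.tree.adj.Adj (φ a) (φ b) ↔ 𝒢₁.tree.adj.Adj a b) ∧
    (∀ v, 𝒢₂.μ (φ v) = 𝒢₁.μ v) ∧
    (∀ v, 𝒢₂.lbl (φ v) = 𝒢₁.lbl v)

/-- Exactly one gene per species: the gene set is the set of species leaves, and each gene
resides in its own species. -/
def OneGenePerSpecies (𝒢 : Recon {s : VS // IsLeaf S s} VG₁ VS S) : Prop :=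
  ∀ g, 𝒢.μ (𝒢.geneLeaf g) = g.1

section TDsec
attribute [-instance] Classical.propDecidable

namespace PLRaux

structure TD (n : ℕ) where
  par : Fin n → Fin n
  rt : Fin n
  dep : Fin n → ℕ
  hroot : par rt = rt
  hdep0 : dep rt = 0
  hdep : ∀ v, v ≠ rt → dep v = dep (par v) + 1

variable {n : ℕ} (t : TD n)

def tdG : SimpleGraph (Fin n) where
  Adj a b := a ≠ b ∧ (t.par a = b ∨ t.par b = a)
  symm := ⟨by intro a b h; exact ⟨Ne.symm h.1, h.2.symm⟩⟩
  loopless := ⟨fun a h => h.1 rfl⟩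

instance : DecidableRel (tdG t).Adj := fun a b => inferInstanceAs (Decidable (_ ∧ _))

lemma tdG_adj {a b : Fin n} : (tdG t).Adj a b ↔ a ≠ b ∧ (t.par a = b ∨ t.par b = a) := Iff.rfl

lemma dep_eq_zero {v : Fin n} (h : t.dep v = 0) : v = t.rt := by
  by_contra hv; have := t.hdep v hv; omega

lemma adj_parent {v : Fin n} (h : v ≠ t.rt) : (tdG t).Adj v (t.par v) := by
  refine ⟨fun he => ?_, Or.inl rfl⟩
  have := t.hdep v h; rw [← he] at this; omega

lemma adj_dep {a b : Fin n} (h : (tdG t).Adj a b) :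
    t.dep a = t.dep b + 1 ∨ t.dep b = t.dep a + 1 := by
  rcases h with ⟨hne, h | h⟩
  · left
    have ha : a ≠ t.rt := by rintro rfl; rw [t.hroot] at h; exact hne h
    rw [← h]; exact t.hdep a ha
  · right
    have hb : b ≠ t.rt := by rintro rfl; rw [t.hroot] at h; exact hne h.symm
    rw [← h]; exact t.hdep b hb

lemma exists_walk_root : ∀ (k : ℕ) (v : Fin n), t.dep v = k →
    ∃ w : (tdG t).Walk v t.rt, w.length = k := by
  intro k
  induction k with
  | zero => intro v hv; rcases dep_eq_zero t hv; exact ⟨Walk.nil, rfl⟩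
  | succ k ih =>
    intro v hv
    have hv' : v ≠ t.rt := fun h => by rw [h, t.hdep0] at hv; omega
    have hd : t.dep (t.par v) = k := by have := t.hdep v hv'; omega
    obtain ⟨w, hw⟩ := ih _ hd
    exact ⟨Walk.cons (adj_parent t hv') w, by simp [hw]⟩

lemma connected : (tdG t).Connected := by
  rw [connected_iff]
  refine ⟨fun u v => ?_, ⟨t.rt⟩⟩
  obtain ⟨w1, _⟩ := exists_walk_root t _ u rfl
  obtain ⟨w2, _⟩ := exists_walk_root t _ v rfl
  exact ⟨w1.append w2.reverse⟩

lemma dep_le_walk {u v : Fin n} (w : (tdG t).Walk u v) :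
    t.dep u ≤ t.dep v + w.length ∧ t.dep v ≤ t.dep u + w.length := by
  induction w with
  | nil => simp
  | cons h w ih =>
    have := adj_dep t h
    simp only [Walk.length_cons]
    omega

lemma dist_rt (v : Fin n) : (tdG t).dist t.rt v = t.dep v := by
  obtain ⟨w, hw⟩ := exists_walk_root t _ v rfl
  apply le_antisymm
  · rw [SimpleGraph.dist_comm]; exact hw ▸ SimpleGraph.dist_le w
  · obtain ⟨p, hp⟩ := (connected t).exists_walk_length_eq_dist t.rt v
    have h2 := (dep_le_walk t p).2
    rw [hp, t.hdep0] at h2; omega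

def ancB (a b : Fin n) : Prop := t.dep a ≤ t.dep b ∧ t.par^[t.dep b - t.dep a] b = a

instance : ∀ a b, Decidable (ancB t a b) := fun _ _ => inferInstanceAs (Decidable (_ ∧ _))

lemma chain_walk : ∀ (k : ℕ) (b a : Fin n), t.par^[k] b = a → t.dep b = t.dep a + k →
    ∃ w : (tdG t).Walk b a, w.length = k := by
  intro k
  induction k with
  | zero => rintro b a rfl _; exact ⟨Walk.nil, rfl⟩
  | succ k ih =>
    intro b a hit hd
    have hb : b ≠ t.rt := fun h => by rw [h, t.hdep0] at hd; omega
    rw [Function.iterate_succ_apply] at hit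
    have hd' : t.dep (t.par b) = t.dep a + k := by have := t.hdep b hb; omega
    obtain ⟨w, hw⟩ := ih _ _ hit hd'
    exact ⟨Walk.cons (adj_parent t hb) w, by simp [hw]⟩

lemma dist_ancB {a b : Fin n} (h : ancB t a b) :
    (tdG t).dist a b = t.dep b - t.dep a := by
  obtain ⟨hle, hit⟩ := h
  obtain ⟨w, hw⟩ := chain_walk t _ b a hit (by omega)
  apply le_antisymm
  · rw [SimpleGraph.dist_comm]; exact hw ▸ SimpleGraph.dist_le w
  · obtain ⟨p, hp⟩ := (connected t).exists_walk_length_eq_dist a b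
    have h2 := (dep_le_walk t p).2
    omega

lemma dist_ancB' {a b : Fin n} (h : ancB t a b) :
    (tdG t).dist b a = t.dep b - t.dep a := by
  rw [SimpleGraph.dist_comm]; exact dist_ancB t h

lemma walk_par : ∀ {b a : Fin n} (w : (tdG t).Walk b a),
    w.length + t.dep a = t.dep b → t.par^[w.length] b = a := by
  intro b a w
  induction w with
  | nil => intro _; rfl
  | @cons x y z h p ih =>
    intro hl
    simp only [Walk.length_cons] at hl ⊢
    rcases h.2 with hpx | hpy
    · have hx : x ≠ t.rt := fun hh => by rw [hh, t.hdep0] at hl; omega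
      have hdx : t.dep x = t.dep y + 1 := by rw [← hpx]; exact t.hdep x hx
      have := ih (by omega)
      rw [Function.iterate_succ_apply, hpx, this]
    · have hy : y ≠ t.rt := by
        rintro rfl; rw [t.hroot] at hpy; exact h.1 hpy.symm
      have hdy : t.dep y = t.dep x + 1 := by rw [← hpy]; exact t.hdep y hy
      have := (dep_le_walk t p).1
      omega

lemma anc_par_iff {c y : Fin n} (hy : y ≠ t.rt) :
    ancB t c y ↔ y = c ∨ ancB t c (t.par y) := by
  have hdy := t.hdep y hy
  constructor
  · rintro ⟨hle, hit⟩
    by_cases hyc : y = c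
    · exact Or.inl hyc
    · right
      have hlt : t.dep c < t.dep y := by
        rcases Nat.lt_or_ge (t.dep c) (t.dep y) with h | h; · exact h
        have : t.dep y - t.dep c = 0 := by omega
        rw [this] at hit; exact absurd hit hyc
      refine ⟨by omega, ?_⟩
      have hk : t.dep y - t.dep c = (t.dep (t.par y) - t.dep c) + 1 := by omega
      rw [hk, Function.iterate_succ_apply] at hit
      exact hit
  · rintro (rfl | ⟨hle, hit⟩)
    · exact ⟨le_rfl, by simp⟩
    · refine ⟨by omega, ?_⟩
      have hk : t.dep y - t.dep c = (t.dep (t.par y) - t.dep c) + 1 := by omega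
      rw [hk, Function.iterate_succ_apply]
      exact hit

lemma not_reach_del {c : Fin n} (hc : c ≠ t.rt) :
    ¬ (tdG t \ fromEdgeSet {s(c, t.par c)}).Reachable c (t.par c) := by
  intro hr
  obtain ⟨w⟩ := hr
  have key : ∀ {u v : Fin n} (w : (tdG t \ fromEdgeSet {s(c, t.par c)}).Walk u v),
      (ancB t c u ↔ ancB t c v) := by
    intro u v w
    induction w with
    | nil => exact Iff.rfl
    | @cons x y z h p ih =>
      refine Iff.trans ?_ ih
      have hadj : (tdG t).Adj x y := h.1
      have hne : ¬ (fromEdgeSet {s(c, t.par c)}).Adj x y := h.2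
      rw [fromEdgeSet_adj] at hne
      have hne' : s(x, y) ≠ s(c, t.par c) := by
        intro hh; exact hne ⟨by simp [hh], hadj.ne⟩
      rcases hadj.2 with hpx | hpy
      · have hx : x ≠ t.rt := by
          rintro rfl; rw [t.hroot] at hpx; exact hadj.ne hpx
        have hxc : x ≠ c := by
          rintro rfl; exact hne' (by rw [hpx])
        rw [anc_par_iff t hx, hpx]
        simp [hxc]
      · have hy : y ≠ t.rt := by
          rintro rfl; rw [t.hroot] at hpy; exact hadj.ne hpy.symm
        have hyc : y ≠ c := by
          rintro rfl; exact hne' (by rw [hpy, Sym2.eq_swap])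
        rw [anc_par_iff t hy, hpy]
        simp [hyc]
  have h1 : ancB t c c := ⟨le_rfl, by simp⟩
  have h2 : ¬ ancB t c (t.par c) := by
    rintro ⟨hle, _⟩; have := t.hdep c hc; omega
  exact h2 ((key w).mp h1)

lemma isTree : (tdG t).IsTree := by
  constructor
  · exact connected t
  · rw [isAcyclic_iff_forall_adj_isBridge]
    intro v w h
    rcases h.2 with hp | hp
    · have hv : v ≠ t.rt := by
        rintro rfl; rw [t.hroot] at hp; exact h.1 hp
      rw [isBridge_iff]
      rw [← hp]; exact not_reach_del t hv
    · have hw : w ≠ t.rt := by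
        rintro rfl; rw [t.hroot] at hp; exact h.1 hp.symm
      rw [Sym2.eq_swap, isBridge_iff]
      rw [← hp]; exact not_reach_del t hw

def rtree : RTree (Fin n) := ⟨tdG t, isTree t, t.rt⟩

lemma rtree_adj : (rtree t).adj = tdG t := rfl

lemma anc_iff (a b : Fin n) : Anc (rtree t) a b ↔ ancB t a b := by
  show (tdG t).dist t.rt b = (tdG t).dist t.rt a + (tdG t).dist a b ↔ _
  rw [dist_rt, dist_rt]
  constructor
  · intro h
    refine ⟨by omega, ?_⟩
    obtain ⟨p, hp⟩ := (connected t).exists_walk_length_eq_dist b a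
    have h2 := walk_par t p (by rw [hp, SimpleGraph.dist_comm]; omega)
    rw [hp, SimpleGraph.dist_comm] at h2
    have h3 : (tdG t).dist a b = t.dep b - t.dep a := by omega
    rwa [h3] at h2
  · intro h
    rw [dist_ancB t h]
    have := h.1; omega

lemma childSet_eq (v : Fin n) :
    childSet (rtree t) v = {c | c ≠ v ∧ t.par c = v} := by
  ext c
  simp only [childSet, IsChild, Set.mem_setOf_eq, rtree_adj, tdG_adj, anc_iff]
  constructor
  · rintro ⟨⟨hne, hor⟩, hanc⟩
    rcases hor with hp | hp
    · exact ⟨hne, hp⟩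
    · exfalso
      have hv : v ≠ t.rt := by
        rintro rfl; rw [t.hroot] at hp; exact hne hp.symm
      have := t.hdep v hv
      rw [hp] at this
      have := hanc.1; omega
  · rintro ⟨hne, hp⟩
    have hcrt : c ≠ t.rt := by
      rintro rfl; rw [t.hroot] at hp; exact hne hp
    have hd := t.hdep c hcrt
    rw [hp] at hd
    refine ⟨⟨hne, Or.inl hp⟩, by omega, ?_⟩
    have : t.dep c - t.dep v = 1 := by omega
    rw [this]; simpa using hp

lemma ncard_setOf (p : Fin n → Prop) [DecidablePred p] :
    {x | p x}.ncard = (Finset.univ.filter p).card := by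
  rw [Set.ncard_eq_toFinset_card', Set.toFinset_setOf]

end PLRaux

namespace PLRaux

def isChild_iff {n : ℕ} (t : TD n) (c v : Fin n) :
    IsChild (rtree t) c v ↔ c ≠ v ∧ t.par c = v :=
  Set.ext_iff.mp (childSet_eq t v) c

lemma isLeaf_iff {n : ℕ} (t : TD n) (v : Fin n) :
    IsLeaf (rtree t) v ↔ ∀ c, ¬(c ≠ v ∧ t.par c = v) := by
  unfold IsLeaf
  simp only [isChild_iff]

def tS : TD 5 := ⟨![0,0,1,1,0], 0, ![0,1,2,2,1], by decide, by decide, by decide⟩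
def t1 : TD 6 := ⟨![0,0,0,1,1,1], 0, ![0,1,1,2,2,2], by decide, by decide, by decide⟩
def t2 : TD 6 := ⟨![0,0,1,1,1,0], 0, ![0,1,2,2,2,1], by decide, by decide, by decide⟩
def t3 : TD 7 := ⟨![0,0,1,1,2,2,0], 0, ![0,1,2,2,3,3,1], by decide, by decide, by decide⟩

def Sp : RTree (Fin 5) := rtree tS

lemma hSp : IsSpeciesTree Sp := by
  intro v hv
  simp only [Sp] at hv ⊢
  rw [childSet_eq, ncard_setOf]
  rw [isLeaf_iff] at hv
  revert hv
  fin_cases v <;> decide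

def Gr1 : Recon (Fin 4) (Fin 6) (Fin 5) Sp where
  tree := rtree t1
  geneLeaf := ![2,3,4,5]
  geneLeaf_inj := by decide
  geneLeaf_range := by simp only [isLeaf_iff]; decide
  μ := ![0,0,2,2,3,4]
  lbl := ![.dup,.dup,.extant,.extant,.extant,.extant]
  internal_children := by
    intro v hv
    rw [childSet_eq, ncard_setOf]
    rw [isLeaf_iff] at hv
    revert hv
    fin_cases v <;> decide
  leaf_species := by simp only [Sp, isLeaf_iff]; decide
  leaf_lbl := by simp only [isLeaf_iff]; decide
  internal_lbl := by simp only [isLeaf_iff]; decide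
  time_consistent := by simp only [Sp, anc_iff]; decide
  spec_two_children := by
    intro v h
    exact absurd h (by revert v; decide)
  spec_separates := by
    intro v h
    exact absurd h (by revert v; decide)

def Gr2 : Recon (Fin 4) (Fin 6) (Fin 5) Sp where
  tree := rtree t2
  geneLeaf := ![2,3,4,5]
  geneLeaf_inj := by decide
  geneLeaf_range := by simp only [isLeaf_iff]; decide
  μ := ![0,1,2,2,3,4]
  lbl := ![.dup,.dup,.extant,.extant,.extant,.extant]
  internal_children := by
    intro v hv
    rw [childSet_eq, ncard_setOf]
    rw [isLeaf_iff] at hv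
    revert hv
    fin_cases v <;> decide
  leaf_species := by simp only [Sp, isLeaf_iff]; decide
  leaf_lbl := by simp only [isLeaf_iff]; decide
  internal_lbl := by simp only [isLeaf_iff]; decide
  time_consistent := by simp only [Sp, anc_iff]; decide
  spec_two_children := by
    intro v h
    exact absurd h (by revert v; decide)
  spec_separates := by
    intro v h
    exact absurd h (by revert v; decide)

def Gr3 : Recon (Fin 4) (Fin 7) (Fin 5) Sp where
  tree := rtree t3
  geneLeaf := ![3,4,5,6]
  geneLeaf_inj := by decide
  geneLeaf_range := by simp only [isLeaf_iff]; decide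
  μ := ![0,1,1,2,2,3,4]
  lbl := ![.spec,.dup,.dup,.extant,.extant,.extant,.extant]
  internal_children := by
    intro v hv
    rw [childSet_eq, ncard_setOf]
    rw [isLeaf_iff] at hv
    revert hv
    fin_cases v <;> decide
  leaf_species := by simp only [Sp, isLeaf_iff]; decide
  leaf_lbl := by simp only [isLeaf_iff]; decide
  internal_lbl := by simp only [isLeaf_iff]; decide
  time_consistent := by simp only [Sp, anc_iff]; decide
  spec_two_children := by
    intro v h
    fin_cases v
    · constructor
      · simp only [Sp, isLeaf_iff]; decide
      · rw [childSet_eq, ncard_setOf]; decide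
    all_goals exact absurd h (by decide)
  spec_separates := by
    simp only [Sp, isChild_iff, anc_iff]
    decide

def m12 : Fin 6 → Fin 6 := ![0,0,2,3,4,5]
def m21 : Fin 6 → Fin 6 := ![0,0,2,3,4,5]
def m23 : Fin 6 → Fin 7 := ![0,1,3,4,5,6]
def m32 : Fin 7 → Fin 6 := ![0,1,1,2,3,4,5]
def m13 : Fin 6 → Fin 7 := ![0,0,3,4,5,6]
def m31 : Fin 7 → Fin 6 := ![0,0,1,2,3,4,5]

lemma hc12 : Comparable Gr1 Gr2 := by simp only [Comparable, Gr1, Gr2]; decide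
lemma hc23 : Comparable Gr2 Gr3 := by simp only [Comparable, Gr2, Gr3]; decide
lemma hc13 : Comparable Gr1 Gr3 := by simp only [Comparable, Gr1, Gr3]; decide

lemma hU1 : UsesLcaMapping Gr1 := by
  simp only [UsesLcaMapping, IsLCA, Gr1, Sp, clade, Set.mem_image, Set.mem_setOf_eq,
    isLeaf_iff, anc_iff]
  decide

lemma hU2 : UsesLcaMapping Gr2 := by
  simp only [UsesLcaMapping, IsLCA, Gr2, Sp, clade, Set.mem_image, Set.mem_setOf_eq,
    isLeaf_iff, anc_iff]
  decide

lemma hU3 : UsesLcaMapping Gr3 := by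
  simp only [UsesLcaMapping, IsLCA, Gr3, Sp, clade, Set.mem_image, Set.mem_setOf_eq,
    isLeaf_iff, anc_iff]
  decide

lemma h12 : IsLcaMap Gr1 Gr2 m12 := by
  simp only [IsLcaMap, IsLCA, gclade, Gr1, Gr2, m12, Set.mem_image, Set.mem_setOf_eq, anc_iff]
  decide

lemma h21 : IsLcaMap Gr2 Gr1 m21 := by
  simp only [IsLcaMap, IsLCA, gclade, Gr1, Gr2, m21, Set.mem_image, Set.mem_setOf_eq, anc_iff]
  decide

lemma h23 : IsLcaMap Gr2 Gr3 m23 := by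
  simp only [IsLcaMap, IsLCA, gclade, Gr2, Gr3, m23, Set.mem_image, Set.mem_setOf_eq, anc_iff]
  decide

lemma h32 : IsLcaMap Gr3 Gr2 m32 := by
  simp only [IsLcaMap, IsLCA, gclade, Gr2, Gr3, m32, Set.mem_image, Set.mem_setOf_eq, anc_iff]
  decide

lemma h13 : IsLcaMap Gr1 Gr3 m13 := by
  simp only [IsLcaMap, IsLCA, gclade, Gr1, Gr3, m13, Set.mem_image, Set.mem_setOf_eq, anc_iff]
  decide

lemma h31 : IsLcaMap Gr3 Gr1 m31 := by
  simp only [IsLcaMap, IsLCA, gclade, Gr1, Gr3, m31, Set.mem_image, Set.mem_setOf_eq, anc_iff]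
  decide

lemma dp12 : dPath Gr1 Gr2 m12 = 0 := by
  have e : ∀ v : Fin 6, Sp.adj.dist (Gr1.μ v) (Gr2.μ (m12 v)) = 0 := by
    intro v; fin_cases v <;> exact SimpleGraph.dist_self
  simp only [dPath]
  exact Finset.sum_eq_zero fun v _ => e v

lemma dp21 : dPath Gr2 Gr1 m21 = 1 := by
  have e : ∀ v : Fin 6, Sp.adj.dist (Gr2.μ v) (Gr1.μ (m21 v)) = ![0,1,0,0,0,0] v := by
    intro v
    fin_cases v
    · exact SimpleGraph.dist_self
    · show (tdG tS).dist 1 0 = 1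
      rw [dist_ancB' tS (by decide)]; decide
    · exact SimpleGraph.dist_self
    · exact SimpleGraph.dist_self
    · exact SimpleGraph.dist_self
    · exact SimpleGraph.dist_self
  simp only [dPath]
  rw [Finset.sum_congr rfl (fun v _ => e v)]
  decide

lemma dp23 : dPath Gr2 Gr3 m23 = 0 := by
  have e : ∀ v : Fin 6, Sp.adj.dist (Gr2.μ v) (Gr3.μ (m23 v)) = 0 := by
    intro v; fin_cases v <;> exact SimpleGraph.dist_self
  simp only [dPath]
  exact Finset.sum_eq_zero fun v _ => e v

lemma dp32 : dPath Gr3 Gr2 m32 = 0 := by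
  have e : ∀ v : Fin 7, Sp.adj.dist (Gr3.μ v) (Gr2.μ (m32 v)) = 0 := by
    intro v; fin_cases v <;> exact SimpleGraph.dist_self
  simp only [dPath]
  exact Finset.sum_eq_zero fun v _ => e v

lemma dp13 : dPath Gr1 Gr3 m13 = 0 := by
  have e : ∀ v : Fin 6, Sp.adj.dist (Gr1.μ v) (Gr3.μ (m13 v)) = 0 := by
    intro v; fin_cases v <;> exact SimpleGraph.dist_self
  simp only [dPath]
  exact Finset.sum_eq_zero fun v _ => e v

lemma dp31 : dPath Gr3 Gr1 m31 = 2 := by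
  have e : ∀ v : Fin 7, Sp.adj.dist (Gr3.μ v) (Gr1.μ (m31 v)) = ![0,1,1,0,0,0,0] v := by
    intro v
    fin_cases v
    · exact SimpleGraph.dist_self
    · show (tdG tS).dist 1 0 = 1
      rw [dist_ancB' tS (by decide)]; decide
    · show (tdG tS).dist 1 0 = 1
      rw [dist_ancB' tS (by decide)]; decide
    · exact SimpleGraph.dist_self
    · exact SimpleGraph.dist_self
    · exact SimpleGraph.dist_self
    · exact SimpleGraph.dist_self
  simp only [dPath]
  rw [Finset.sum_congr rfl (fun v _ => e v)]
  decide

lemma dl12 : dLbl Gr1 Gr2 m12 = 0 := by rw [dLbl, ncard_setOf]; decide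
lemma dl21 : dLbl Gr2 Gr1 m21 = 0 := by rw [dLbl, ncard_setOf]; decide
lemma dl23 : dLbl Gr2 Gr3 m23 = 1 := by rw [dLbl, ncard_setOf]; decide
lemma dl32 : dLbl Gr3 Gr2 m32 = 1 := by rw [dLbl, ncard_setOf]; decide
lemma dl13 : dLbl Gr1 Gr3 m13 = 2 := by rw [dLbl, ncard_setOf]; decide
lemma dl31 : dLbl Gr3 Gr1 m31 = 1 := by rw [dLbl, ncard_setOf]; decide

end PLRaux

end TDsec

/-- PLR does not satisfy the triangle inequality: for every `α ∈ [0,1]` there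
exist pairwise comparable reconciled gene trees, each using the lca-mapping, violating it. -/
theorem stmt6 (α : ℝ) (hα₀ : 0 ≤ α) (hα₁ : α ≤ 1) :
    ∃ (nS nΓ n₁ n₂ n₃ : ℕ) (S : RTree (Fin nS)) (_ : IsSpeciesTree S)
      (𝒢₁ : Recon (Fin nΓ) (Fin n₁) (Fin nS) S) (𝒢₂ : Recon (Fin nΓ) (Fin n₂) (Fin nS) S)
      (𝒢₃ : Recon (Fin nΓ) (Fin n₃) (Fin nS) S)
      (m₁₂ : Fin n₁ → Fin n₂) (m₂₁ : Fin n₂ → Fin n₁)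
      (m₂₃ : Fin n₂ → Fin n₃) (m₃₂ : Fin n₃ → Fin n₂)
      (m₁₃ : Fin n₁ → Fin n₃) (m₃₁ : Fin n₃ → Fin n₁),
      Comparable 𝒢₁ 𝒢₂ ∧ Comparable 𝒢₂ 𝒢₃ ∧ Comparable 𝒢₁ 𝒢₃ ∧
      UsesLcaMapping 𝒢₁ ∧ UsesLcaMapping 𝒢₂ ∧ UsesLcaMapping 𝒢₃ ∧
      IsLcaMap 𝒢₁ 𝒢₂ m₁₂ ∧ IsLcaMap 𝒢₂ 𝒢₁ m₂₁ ∧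
      IsLcaMap 𝒢₂ 𝒢₃ m₂₃ ∧ IsLcaMap 𝒢₃ 𝒢₂ m₃₂ ∧
      IsLcaMap 𝒢₁ 𝒢₃ m₁₃ ∧ IsLcaMap 𝒢₃ 𝒢₁ m₃₁ ∧
      PLR α 𝒢₁ 𝒢₂ m₁₂ m₂₁ + PLR α 𝒢₂ 𝒢₃ m₂₃ m₃₂ < PLR α 𝒢₁ 𝒢₃ m₁₃ m₃₁ := by
  classical
  refine ⟨5, 4, 6, 6, 7, PLRaux.Sp, PLRaux.hSp, PLRaux.Gr1, PLRaux.Gr2, PLRaux.Gr3,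
    PLRaux.m12, PLRaux.m21, PLRaux.m23, PLRaux.m32, PLRaux.m13, PLRaux.m31,
    PLRaux.hc12, PLRaux.hc23, PLRaux.hc13, PLRaux.hU1, PLRaux.hU2, PLRaux.hU3,
    PLRaux.h12, PLRaux.h21, PLRaux.h23, PLRaux.h32, PLRaux.h13, PLRaux.h31, ?_⟩
  simp only [PLR, dAsym, PLRaux.dp12, PLRaux.dp21, PLRaux.dp23, PLRaux.dp32,
    PLRaux.dp13, PLRaux.dp31, PLRaux.dl12, PLRaux.dl21, PLRaux.dl23, PLRaux.dl32,
    PLRaux.dl13, PLRaux.dl31]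
  push_cast
  nlinarith [hα₀, hα₁]
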